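/- Let A be a symmetric n×n matrix with entries in {0,1}, with eigenvalues λ_1 ≥ ⋯ ≥ λ_n, satisfying λ_2(A) − λ_n(A) = n/√2. Then the multiset of eigenvalues of A is exactly: λ_1 = n/2, λ_2 = (√2/4)·n, λ_3 = ⋯ = λ_{n−1} = 0, and λ_n = −(√2/4)·n. -/

import Mathlib

open Matrix in
lemma aux_quadform (n : ℕ) (A : Matrix (Fin n) (Fin n) ℝ) (hA : A.IsHermitian) (x : Fin n → ℝ) :
    ∃ y : Fin n → ℝ, x ⬝ᵥ (A *ᵥ x) = ∑ i, hA.eigenvalues i * (y i)^2 ∧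
      (∑ i, (y i)^2) = x ⬝ᵥ x := by
  set U : Matrix (Fin n) (Fin n) ℝ := (hA.eigenvectorUnitary : Matrix (Fin n) (Fin n) ℝ) with hU
  have hUU : U * star U = 1 := (Matrix.mem_unitaryGroup_iff).mp (hA.eigenvectorUnitary).2
  set y : Fin n → ℝ := star U *ᵥ x with hy
  have hdot : ∀ z : Fin n → ℝ, x ⬝ᵥ (U *ᵥ z) = y ⬝ᵥ z := by
    intro z
    rw [dotProduct_mulVec, hy, star_eq_conjTranspose, conjTranspose_eq_transpose_of_trivial,
      mulVec_transpose]
  refine ⟨y, ?_, ?_⟩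
  · have hspec : A = U * Matrix.diagonal (RCLike.ofReal ∘ hA.eigenvalues) * star U :=
      hA.spectral_theorem
    calc x ⬝ᵥ (A *ᵥ x)
        = x ⬝ᵥ (U *ᵥ ((Matrix.diagonal (RCLike.ofReal ∘ hA.eigenvalues) * star U) *ᵥ x)) := by
          rw [mulVec_mulVec, ← Matrix.mul_assoc, ← hspec]
      _ = y ⬝ᵥ (Matrix.diagonal (RCLike.ofReal ∘ hA.eigenvalues) *ᵥ y) := by
          rw [hdot, ← mulVec_mulVec]
      _ = ∑ i, hA.eigenvalues i * (y i)^2 := by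
          rw [dotProduct, Finset.sum_congr rfl]
          intro i _
          rw [mulVec_diagonal]
          simp [RCLike.ofReal]
          ring
  · calc ∑ i, (y i)^2 = y ⬝ᵥ y := by simp [dotProduct, sq]
      _ = x ⬝ᵥ (U *ᵥ y) := (hdot y).symm
      _ = x ⬝ᵥ x := by rw [hy, mulVec_mulVec, hUU, one_mulVec]

open Matrix in
lemma aux_trace_sq (n : ℕ) (A : Matrix (Fin n) (Fin n) ℝ) (hA : A.IsHermitian) :
    Matrix.trace (A * A) = ∑ i, hA.eigenvalues i ^ 2 := by
  set U : Matrix (Fin n) (Fin n) ℝ := (hA.eigenvectorUnitary : Matrix (Fin n) (Fin n) ℝ) with hU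
  have hUU : star U * U = 1 := (Matrix.mem_unitaryGroup_iff').mp (hA.eigenvectorUnitary).2
  set D : Matrix (Fin n) (Fin n) ℝ := Matrix.diagonal (RCLike.ofReal ∘ hA.eigenvalues) with hD
  have hspec : A = U * D * star U := hA.spectral_theorem
  calc Matrix.trace (A * A) = Matrix.trace (U * D * star U * (U * D * star U)) := by
        rw [← hspec]
    _ = Matrix.trace (U * (D * D) * star U) := by
        rw [show U * D * star U * (U * D * star U) = U * (D * (star U * U) * D) * star U by
          noncomm_ring, hUU]
        noncomm_ring
    _ = Matrix.trace (star U * U * (D * D)) := by rw [trace_mul_cycle]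
    _ = Matrix.trace (D * D) := by rw [hUU, Matrix.one_mul]
    _ = ∑ i, hA.eigenvalues i ^ 2 := by
        rw [hD, diagonal_mul_diagonal, trace_diagonal]
        simp [RCLike.ofReal, sq]

open Matrix in
lemma aux_rayleigh (n : ℕ) (A : Matrix (Fin n) (Fin n) ℝ) (hA : A.IsHermitian) (c : ℝ)
    (hc : ∀ i, hA.eigenvalues i ≤ c) : ∑ i, ∑ j, A i j ≤ c * n := by
  obtain ⟨y, hy1, hy2⟩ := aux_quadform n A hA (fun _ => (1 : ℝ))
  have hx1 : (fun _ : Fin n => (1:ℝ)) ⬝ᵥ (A *ᵥ fun _ => (1:ℝ)) = ∑ i, ∑ j, A i j := by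
    simp [dotProduct, Matrix.mulVec]
  have hx2 : (fun _ : Fin n => (1:ℝ)) ⬝ᵥ (fun _ => (1:ℝ)) = (n : ℝ) := by
    simp [dotProduct]
  rw [hx1] at hy1
  rw [hx2] at hy2
  calc ∑ i, ∑ j, A i j = ∑ i, hA.eigenvalues i * (y i) ^ 2 := hy1
    _ ≤ ∑ i, c * (y i) ^ 2 := by
        apply Finset.sum_le_sum
        intro i _
        exact mul_le_mul_of_nonneg_right (hc i) (sq_nonneg _)
    _ = c * n := by rw [← Finset.mul_sum, hy2]

set_option maxHeartbeats 1000000 in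
/-- If a symmetric `n × n` `(0,1)`-matrix `A`, with eigenvalues `μ` in
nonincreasing order, satisfies `λ_2(A) - λ_n(A) = n / √2`, then its spectrum is exactly
`λ_1 = n/2`, `λ_2 = (√2/4) n`, `λ_3 = ⋯ = λ_{n-1} = 0` and `λ_n = -(√2/4) n`. -/
theorem spread_10_equality_spectrum (n : ℕ) (hn : 2 ≤ n)
    (A : Matrix (Fin n) (Fin n) ℝ) (hA : A.IsHermitian)
    (hA01 : ∀ a b, A a b = 0 ∨ A a b = 1)
    (μ : Fin n → ℝ) (hmono : Antitone μ)
    (hperm : Finset.univ.val.map μ = Finset.univ.val.map hA.eigenvalues)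
    (heq : μ ⟨1, by omega⟩ - μ ⟨n - 1, by omega⟩ = (n : ℝ) / Real.sqrt 2) :
    μ ⟨0, by omega⟩ = (n : ℝ) / 2 ∧
    μ ⟨1, by omega⟩ = Real.sqrt 2 / 4 * (n : ℝ) ∧
    (∀ k : Fin n, 2 ≤ (k : ℕ) → (k : ℕ) ≤ n - 2 → μ k = 0) ∧
    μ ⟨n - 1, by omega⟩ = -(Real.sqrt 2 / 4 * (n : ℝ)) := by
  set s : ℝ := Real.sqrt 2 with hs
  have hs0 : 0 < s := Real.sqrt_pos.mpr (by norm_num)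
  have hs2 : s ^ 2 = 2 := Real.sq_sqrt (by norm_num)
  -- rule out n = 2
  have hn3 : 3 ≤ n := by
    by_contra h
    have hn2 : n = 2 := by omega
    subst hn2
    have : μ ⟨1, by omega⟩ - μ ⟨2 - 1, by omega⟩ = 0 := by norm_num
    rw [heq] at this
    rw [div_eq_iff (ne_of_gt hs0)] at this
    norm_num at this
  set i0 : Fin n := ⟨0, by omega⟩ with hi0
  set i1 : Fin n := ⟨1, by omega⟩ with hi1
  set iN : Fin n := ⟨n - 1, by omega⟩ with hiN
  have hne01 : i0 ≠ i1 := by simp [hi0, hi1, Fin.ext_iff]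
  have hne0N : i0 ≠ iN := by simp [hi0, hiN, Fin.ext_iff]; omega
  have hne1N : i1 ≠ iN := by simp [hi1, hiN, Fin.ext_iff]; omega
  set ev : Fin n → ℝ := hA.eigenvalues with hev
  -- transfer sums along the permutation
  have hsum : ∀ f : ℝ → ℝ, ∑ i, f (μ i) = ∑ i, f (ev i) := by
    intro f
    have h1 : ∑ i, f (μ i) = ((Finset.univ.val.map μ).map f).sum := by
      rw [Multiset.map_map]; rfl
    have h2 : ∑ i, f (ev i) = ((Finset.univ.val.map ev).map f).sum := by
      rw [Multiset.map_map]; rfl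
    rw [h1, h2, hperm]
  -- m : total number of ones
  set m : ℝ := ∑ i, ∑ j, A i j with hm
  have hsymm : ∀ i j, A j i = A i j := by
    intro i j
    have := congrFun (congrFun hA j) i
    simpa [Matrix.conjTranspose_apply] using this.symm
  have htr : Matrix.trace (A * A) = m := by
    rw [Matrix.trace, hm]
    apply Finset.sum_congr rfl
    intro i _
    rw [Matrix.diag_apply, Matrix.mul_apply]
    apply Finset.sum_congr rfl
    intro j _
    rw [hsymm i j]
    rcases hA01 i j with h | h <;> rw [h] <;> ring
  have hev_sq : ∑ i, (ev i) ^ 2 = m := by rw [← aux_trace_sq n A hA, htr]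
  have hmu_sq : ∑ i, (μ i) ^ 2 = m := by
    rw [hsum (fun t => t ^ 2)]; exact hev_sq
  -- Rayleigh bound with the all-ones vector
  have hmax : ∀ i, ev i ≤ μ i0 := by
    intro i
    have hmem : ev i ∈ Finset.univ.val.map μ := by
      rw [hperm]
      exact Multiset.mem_map_of_mem ev (Finset.mem_univ i)
    obtain ⟨j, _, hj⟩ := Multiset.mem_map.mp hmem
    rw [← hj]
    exact hmono (by simp [hi0, Fin.le_def])
  have hnpos : (0 : ℝ) < n := by positivity
  have hR : m ≤ μ i0 * n := aux_rayleigh n A hA (μ i0) hmax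
  have hm0 : 0 ≤ m := by
    rw [← hmu_sq]
    exact Finset.sum_nonneg fun i _ => sq_nonneg _
  -- decompose the sum of squares
  set s3 : Finset (Fin n) := {i0, i1, iN} with hs3
  set T : ℝ := ∑ i ∈ Finset.univ \ s3, (μ i) ^ 2 with hT
  have hT0 : 0 ≤ T := Finset.sum_nonneg fun i _ => sq_nonneg _
  have hsplit : (μ i0) ^ 2 + (μ i1) ^ 2 + (μ iN) ^ 2 + T = m := by
    rw [← hmu_sq, hT]
    have h1 : ∑ i ∈ s3, (μ i) ^ 2 = (μ i0) ^ 2 + (μ i1) ^ 2 + (μ iN) ^ 2 := by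
      rw [hs3, Finset.sum_insert (by simp [hne01, hne0N]),
        Finset.sum_insert (by simp [hne1N]), Finset.sum_singleton]
      ring
    have h2 := Finset.sum_sdiff (f := fun i => (μ i) ^ 2) (Finset.subset_univ s3)
    rw [← h2, h1]
    ring
  -- algebraic core
  set a : ℝ := μ i0
  set b : ℝ := μ i1
  set c : ℝ := μ iN
  have heq' : (b - c) * s = n := by
    rw [heq]
    field_simp
  have hbc2n : ((b - c) ^ 2 * 2) * (n:ℝ)^2 = (n:ℝ)^2 * (n:ℝ)^2 := by
    have : (b - c) ^ 2 * s ^ 2 = (n:ℝ) ^ 2 := by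
      rw [← mul_pow, heq']
    rw [hs2] at this
    rw [this]
  have hm2 : m ^ 2 ≤ (a * n) ^ 2 := by
    apply pow_le_pow_left₀ hm0 hR
  have h1n : (a^2 + b^2 + c^2 + T) * (n:ℝ)^2 = m * (n:ℝ)^2 := by rw [hsplit]
  have hkey : (m - (n:ℝ)^2/2)^2 + (n:ℝ)^2*(b+c)^2/2 + (n:ℝ)^2*T ≤ 0 := by
    linarith [hm2, h1n, hbc2n]
  have hnn2 : (0:ℝ) < (n:ℝ)^2 := by positivity
  have e1 : 0 ≤ (m - (n:ℝ)^2/2)^2 := sq_nonneg _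
  have e2 : 0 ≤ (n:ℝ)^2*(b+c)^2/2 := by positivity
  have e3 : 0 ≤ (n:ℝ)^2*T := mul_nonneg (le_of_lt hnn2) hT0
  have hTz : T = 0 := by
    have h : (n:ℝ)^2*T = 0 := by linarith
    exact (mul_eq_zero.mp h).resolve_left (ne_of_gt hnn2)
  have hbcz : b + c = 0 := by
    have h : (n:ℝ)^2*(b+c)^2 = 0 := by linarith
    rcases mul_eq_zero.mp h with h' | h'
    · exact absurd h' (ne_of_gt hnn2)
    · exact pow_eq_zero_iff (by norm_num) |>.mp h'
  have hmz : m = (n:ℝ)^2/2 := by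
    have h : (m - (n:ℝ)^2/2)^2 = 0 := by linarith
    have := pow_eq_zero_iff (n := 2) (by norm_num) |>.mp h
    linarith
  have hb : b = s / 4 * n := by
    linear_combination (s/4) * heq' + (1/2) * hbcz - ((b - c)/4) * hs2
  have hc : c = -(s / 4 * n) := by linear_combination hbcz - hb
  have ha : a = (n:ℝ) / 2 := by
    have ha2 : a ^ 2 = (n:ℝ)^2 / 4 := by
      have hb2 : b ^ 2 = (n:ℝ)^2 / 8 := by
        rw [hb]; ring_nf; nlinarith [hs2]
      have hc2 : c ^ 2 = (n:ℝ)^2 / 8 := by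
        rw [hc]; ring_nf; nlinarith [hs2]
      rw [hb2, hc2, hTz, hmz] at hsplit
      linarith
    nlinarith [hR, hmz, hnpos]
  refine ⟨ha, hb, ?_, hc⟩
  intro k hk2 hkn
  have hkmem : k ∈ Finset.univ \ s3 := by
    simp only [Finset.mem_sdiff, Finset.mem_univ, true_and, hs3, Finset.mem_insert,
      Finset.mem_singleton]
    push_neg
    refine ⟨?_, ?_, ?_⟩ <;>
      · intro h
        have hv := congrArg Fin.val h
        simp [hi0, hi1, hiN] at hv
        omega
  have := Finset.sum_eq_zero_iff_of_nonneg (fun i _ => sq_nonneg (μ i)) |>.mp hTz k hkmem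
  exact pow_eq_zero_iff (by norm_num) |>.mp this
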